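/- Let G be a finite simple graph, let (X,Y) be a partition of V(G), and let (A,B) be a partition of V(G). Then cutrank_G(X,Y) ≥ cutrank_G(A ∩ X, A ∩ Y) + cutrank_G(B ∩ X, B ∩ Y) − cutrank_G(A, B). -/

import Mathlib

open Classical

/-- The cutrank of a pair of vertex sets `X`, `Y` in a graph `G`:
the rank over `𝔽₂` of the `X × Y` biadjacency matrix. -/
noncomputable def cutrank {V : Type*} (G : SimpleGraph V) (X Y : Finset V) : ℕ :=
  Matrix.rank (Matrix.of fun (x : X) (y : Y) => if G.Adj x.1 y.1 then (1 : ZMod 2) else 0)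

section Aux

open Submodule Module

variable {V : Type*} [Fintype V]

/-- Restriction of a function `V → 𝔽₂` to a finset `S`. -/
noncomputable def cproj (S : Finset V) : (V → ZMod 2) →ₗ[ZMod 2] (S → ZMod 2) :=
  LinearMap.funLeft (ZMod 2) (ZMod 2) (fun s => s.1)

/-- Span of the columns of `N` indexed by `T`. -/
noncomputable def colSpan (N : Matrix V V (ZMod 2)) (T : Finset V) :
    Submodule (ZMod 2) (V → ZMod 2) :=
  Submodule.span (ZMod 2) ((fun t => fun v => N v t) '' (T : Set V))

lemma ker_cproj_mono {S' S : Finset V} (h : S' ⊆ S) :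
    LinearMap.ker (cproj S) ≤ LinearMap.ker (cproj (V := V) S') := by
  intro g hg
  simp only [LinearMap.mem_ker] at *
  funext s
  exact congrFun hg ⟨s.1, h s.2⟩

lemma colSpan_mono (N : Matrix V V (ZMod 2)) {T' T : Finset V} (h : T' ⊆ T) :
    colSpan N T' ≤ colSpan N T :=
  Submodule.span_mono (Set.image_mono (by exact_mod_cast h))

lemma cutrank_eq_finrank {G : SimpleGraph V} (S T : Finset V) :
    cutrank G S T =
      finrank (ZMod 2)
        ((colSpan (Matrix.of fun u v => if G.Adj u v then (1 : ZMod 2) else 0) T).map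
          (cproj S)) := by
  set N : Matrix V V (ZMod 2) := Matrix.of fun u v => if G.Adj u v then (1 : ZMod 2) else 0
  have h1 : cutrank G S T = Matrix.rank (N.submatrix (fun x : S => x.1) (fun y : T => y.1)) := rfl
  rw [h1, Matrix.rank_eq_finrank_span_cols]
  have h2 : Submodule.span (ZMod 2)
      (Set.range (N.submatrix (fun x : S => x.1) (fun y : T => y.1)).col)
      = (colSpan N T).map (cproj S) := by
    rw [colSpan, Submodule.map_span]
    congr 1
    rw [Set.image_image, Set.image_eq_range]
    rfl
  rw [h2]

lemma finrank_map_add_finrank_inf_ker {W W' : Type*} [AddCommGroup W] [Module (ZMod 2) W]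
    [AddCommGroup W'] [Module (ZMod 2) W'] [FiniteDimensional (ZMod 2) W]
    (π : W →ₗ[ZMod 2] W') (U : Submodule (ZMod 2) W) :
    finrank (ZMod 2) (U.map π) + finrank (ZMod 2) (U ⊓ LinearMap.ker π : Submodule (ZMod 2) W)
      = finrank (ZMod 2) U := by
  have h := LinearMap.finrank_range_add_finrank_ker (π.domRestrict U)
  rw [LinearMap.range_domRestrict, LinearMap.ker_domRestrict] at h
  rw [← Submodule.map_comap_subtype, Submodule.finrank_map_subtype_eq]
  exact h

end Aux

/-- For partitions `(X, Y)` and `(A, B)` of `V(G)`,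
`cutrank(X, Y) ≥ cutrank(A ∩ X, A ∩ Y) + cutrank(B ∩ X, B ∩ Y) − cutrank(A, B)`
(stated additively to avoid truncated subtraction). -/
theorem cutrank_ge_sub_cutranks
    {V : Type*} [Fintype V] (G : SimpleGraph V) (X Y A B : Finset V)
    (hXY : X ∪ Y = Finset.univ) (hdXY : Disjoint X Y)
    (hAB : A ∪ B = Finset.univ) (hdAB : Disjoint A B) :
    cutrank G (A ∩ X) (A ∩ Y) + cutrank G (B ∩ X) (B ∩ Y) ≤
      cutrank G X Y + cutrank G A B := by
  classical
  open Submodule Module in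
  rw [cutrank_eq_finrank (A ∩ X) (A ∩ Y), cutrank_eq_finrank (B ∩ X) (B ∩ Y),
    cutrank_eq_finrank X Y, cutrank_eq_finrank A B]
  set N : Matrix V V (ZMod 2) := Matrix.of fun u v => if G.Adj u v then (1 : ZMod 2) else 0
    with hN
  set U1 := colSpan N Y
  set U2 := colSpan N B
  -- step 1 : first term bounded by rank of projection of U1 ⊔ U2
  have s1 : finrank (ZMod 2) ((colSpan N (A ∩ Y)).map (cproj (A ∩ X))) ≤
      finrank (ZMod 2) ((U1 ⊔ U2).map (cproj (A ∩ X))) := by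
    apply Submodule.finrank_mono
    exact Submodule.map_mono ((colSpan_mono N (Finset.inter_subset_right)).trans le_sup_left)
  -- step 2 : second term bounded by rank of projection of U1 ⊓ U2
  have s2 : finrank (ZMod 2) ((colSpan N (B ∩ Y)).map (cproj (B ∩ X))) ≤
      finrank (ZMod 2) ((U1 ⊓ U2).map (cproj (B ∩ X))) := by
    apply Submodule.finrank_mono
    exact Submodule.map_mono (le_inf (colSpan_mono N Finset.inter_subset_right)
      (colSpan_mono N Finset.inter_subset_left))
  -- rank-nullity for the four projections
  have r1 := finrank_map_add_finrank_inf_ker (cproj (V := V) (A ∩ X)) (U1 ⊔ U2)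
  have r2 := finrank_map_add_finrank_inf_ker (cproj (V := V) (B ∩ X)) (U1 ⊓ U2)
  have r3 := finrank_map_add_finrank_inf_ker (cproj (V := V) X) U1
  have r4 := finrank_map_add_finrank_inf_ker (cproj (V := V) A) U2
  set W1 := U1 ⊓ LinearMap.ker (cproj (V := V) X) with hW1
  set W2 := U2 ⊓ LinearMap.ker (cproj (V := V) A) with hW2
  -- dimension formula for sup and inf
  have e1 : finrank (ZMod 2) (W1 ⊔ W2 : Submodule (ZMod 2) (V → ZMod 2))
      + finrank (ZMod 2) (W1 ⊓ W2 : Submodule (ZMod 2) (V → ZMod 2))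
      = finrank (ZMod 2) W1 + finrank (ZMod 2) W2 :=
    Submodule.finrank_sup_add_finrank_inf_eq _ _
  have e2 : finrank (ZMod 2) (U1 ⊔ U2 : Submodule (ZMod 2) (V → ZMod 2))
      + finrank (ZMod 2) (U1 ⊓ U2 : Submodule (ZMod 2) (V → ZMod 2))
      = finrank (ZMod 2) U1 + finrank (ZMod 2) U2 :=
    Submodule.finrank_sup_add_finrank_inf_eq _ _
  -- the two kernel comparison inequalities
  have k1 : finrank (ZMod 2) (W1 ⊔ W2 : Submodule (ZMod 2) (V → ZMod 2)) ≤
      finrank (ZMod 2) ((U1 ⊔ U2) ⊓ LinearMap.ker (cproj (V := V) (A ∩ X))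
        : Submodule (ZMod 2) (V → ZMod 2)) := by
    apply Submodule.finrank_mono
    apply sup_le
    · exact le_inf (inf_le_left.trans le_sup_left)
        (inf_le_right.trans (ker_cproj_mono Finset.inter_subset_right))
    · exact le_inf (inf_le_left.trans le_sup_right)
        (inf_le_right.trans (ker_cproj_mono Finset.inter_subset_left))
  have k2 : finrank (ZMod 2) (W1 ⊓ W2 : Submodule (ZMod 2) (V → ZMod 2)) ≤
      finrank (ZMod 2) ((U1 ⊓ U2) ⊓ LinearMap.ker (cproj (V := V) (B ∩ X))
        : Submodule (ZMod 2) (V → ZMod 2)) := by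
    apply Submodule.finrank_mono
    refine le_inf (inf_le_inf inf_le_left inf_le_left) ?_
    exact (inf_le_left.trans inf_le_right).trans (ker_cproj_mono Finset.inter_subset_right)
  omega
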